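/- Let α ∈ (0,1) and let X be an ℕ-valued random variable satisfying the recursive distributional equation. Then for every s ∈ (0,1], ((2−p)s + p)² − 4s·exp(α(s−1)) ≥ 0. -/

import Mathlib

open scoped ENNReal

/-- The Poisson(α) probability mass function on ℕ. -/
noncomputable def poissonPMF (α : ℝ) (k : ℕ) : ℝ≥0∞ :=
  ENNReal.ofReal (Real.exp (-α) * α ^ k / (Nat.factorial k))

/-- The Geometric(1/2) pmf: P(N = k) = (1/2)^(k+1) for k ≥ 0. -/
noncomputable def geomHalf (k : ℕ) : ℝ≥0∞ := (1 / 2) ^ (k + 1)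

/-- The law of (X - 1)⁺ when X has law μ on ℕ. -/
noncomputable def shiftLaw (μ : ℕ → ℝ≥0∞) (k : ℕ) : ℝ≥0∞ :=
  if k = 0 then μ 0 + μ 1 else μ (k + 1)

/-- Convolution of two (sub-)pmfs on ℕ: the law of an independent sum. -/
noncomputable def convAdd (f g : ℕ → ℝ≥0∞) (k : ℕ) : ℝ≥0∞ :=
  ∑ j ∈ Finset.range (k + 1), f j * g (k - j)

/-- n-fold convolution of a pmf on ℕ: the law of a sum of n i.i.d. copies. -/
noncomputable def iterConv (f : ℕ → ℝ≥0∞) : ℕ → ℕ → ℝ≥0∞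
  | 0 => fun k => if k = 0 then 1 else 0
  | n + 1 => convAdd (iterConv f n) f

/-- μ is the law of an ℕ-valued random variable X satisfying the RDE
    X =_d P + ∑_{i=1}^N (X_i - 1)⁺, with P ~ Poisson(α), N ~ Geom(1/2),
    X_i i.i.d. with law μ, all independent. -/
def SatisfiesRDE (α : ℝ) (μ : ℕ → ℝ≥0∞) : Prop :=
  (∑' k, μ k) = 1 ∧
  ∀ k, μ k = ∑' n, geomHalf n * convAdd (poissonPMF α) (iterConv (shiftLaw μ) n) k

/-- The probability generating function G(s) = E[s^X]. -/
noncomputable def pgf (μ : ℕ → ℝ≥0∞) (s : ℝ) : ℝ := ∑' k, (μ k).toReal * s ^ k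

/-- The mean E[X] = ∑ k · P(X = k), valued in [0,∞]. -/
noncomputable def meanENN (μ : ℕ → ℝ≥0∞) : ℝ≥0∞ := ∑' k : ℕ, (k : ℝ≥0∞) * μ k

noncomputable def GE (f : ℕ → ℝ≥0∞) (t : ℝ≥0∞) : ℝ≥0∞ := ∑' k, f k * t ^ k

lemma enn_cauchy (f g : ℕ → ℝ≥0∞) :
    ((∑' n, f n) * ∑' n, g n) = ∑' n, ∑ k ∈ Finset.range (n + 1), f k * g (n - k) := by
  simp_rw [← Finset.Nat.sum_antidiagonal_eq_sum_range_succ fun k l ↦ f k * g l]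
  have h1 : ((∑' n, f n) * ∑' n, g n) = ∑' p : ℕ × ℕ, f p.1 * g p.2 := by
    rw [ENNReal.tsum_prod']
    simp_rw [ENNReal.tsum_mul_left, ENNReal.tsum_mul_right]
  have h2 : (∑' p : ℕ × ℕ, f p.1 * g p.2)
      = ∑' x : Σ n : ℕ, Finset.HasAntidiagonal.antidiagonal n,
          f (x.2 : ℕ × ℕ).1 * g (x.2 : ℕ × ℕ).2 :=
    (Finset.HasAntidiagonal.sigmaAntidiagonalEquivProd.tsum_eq fun p : ℕ × ℕ => f p.1 * g p.2).symm
  rw [h1, h2, ENNReal.tsum_sigma']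
  refine tsum_congr fun n => (tsum_fintype _).trans ?_
  exact Finset.sum_finset_coe (fun ij : ℕ × ℕ => f ij.1 * g ij.2) _

lemma GE_convAdd (f g : ℕ → ℝ≥0∞) (t : ℝ≥0∞) :
    GE (convAdd f g) t = GE f t * GE g t := by
  unfold GE convAdd
  rw [enn_cauchy]
  refine tsum_congr fun n => ?_
  rw [Finset.sum_mul]
  refine Finset.sum_congr rfl fun k hk => ?_
  have hle : k ≤ n := Nat.lt_succ_iff.mp (Finset.mem_range.mp hk)
  rw [mul_mul_mul_comm, ← pow_add, Nat.add_sub_cancel' hle]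

lemma GE_iter (f : ℕ → ℝ≥0∞) (t : ℝ≥0∞) (n : ℕ) :
    GE (iterConv f n) t = (GE f t) ^ n := by
  induction n with
  | zero =>
      simp only [iterConv, GE, pow_zero]
      rw [tsum_eq_single 0 (by intro k hk; simp [hk])]
      simp
  | succ n ih => rw [iterConv, GE_convAdd, ih, pow_succ]

lemma GE_le_one {f : ℕ → ℝ≥0∞} (hf : ∑' k, f k = 1) {t : ℝ≥0∞} (ht : t ≤ 1) :
    GE f t ≤ 1 := by
  calc GE f t ≤ ∑' k, f k := by
        refine Summable.tsum_le_tsum (fun k => ?_) ENNReal.summable ENNReal.summable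
        calc f k * t ^ k ≤ f k * 1 := mul_le_mul_right (pow_le_one' ht k) _
          _ = f k := mul_one _
    _ = 1 := hf

lemma shift_tsum (μ : ℕ → ℝ≥0∞) : ∑' k, shiftLaw μ k = ∑' k, μ k := by
  rw [tsum_eq_zero_add' ENNReal.summable, tsum_eq_zero_add' ENNReal.summable (f := μ)]
  rw [tsum_eq_zero_add' ENNReal.summable (f := fun k => μ (k + 1))]
  simp only [show ∀ k : ℕ, shiftLaw μ (k + 1) = μ (k + 2) from fun k => rfl,
    show shiftLaw μ 0 = μ 0 + μ 1 from rfl]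
  ring

lemma GE_shift (μ : ℕ → ℝ≥0∞) (t : ℝ≥0∞) :
    t * GE (shiftLaw μ) t + μ 0 = GE μ t + μ 0 * t := by
  have e1 : GE μ t = μ 0 + (μ 1 * t ^ 1 + ∑' k, μ (k + 2) * t ^ (k + 2)) := by
    unfold GE
    rw [tsum_eq_zero_add' ENNReal.summable, tsum_eq_zero_add' ENNReal.summable]
    simp [pow_zero]
  have e2 : GE (shiftLaw μ) t = (μ 0 + μ 1) + ∑' k, μ (k + 2) * t ^ (k + 1) := by
    unfold GE
    rw [tsum_eq_zero_add' ENNReal.summable]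
    simp only [show ∀ k : ℕ, shiftLaw μ (k + 1) = μ (k + 2) from fun k => rfl,
      show shiftLaw μ 0 = μ 0 + μ 1 from rfl, pow_zero, mul_one]
  have e3 : t * ∑' k, μ (k + 2) * t ^ (k + 1) = ∑' k, μ (k + 2) * t ^ (k + 2) := by
    rw [← ENNReal.tsum_mul_left]
    exact tsum_congr fun k => by ring
  rw [e1, e2, mul_add, e3]
  ring

lemma geom_tsum : ∑' n, geomHalf n = 1 := by
  unfold geomHalf
  simp_rw [pow_succ']
  rw [ENNReal.tsum_mul_left, ENNReal.tsum_geometric]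
  rw [show ((1:ℝ≥0∞)/2) = 2⁻¹ by norm_num, ENNReal.one_sub_inv_two, inv_inv]
  exact ENNReal.inv_mul_cancel (by norm_num) (by norm_num)

lemma geom_mul {x : ℝ≥0∞} (hx : x ≤ 1) :
    (2 - x) * ∑' n, geomHalf n * x ^ n = 1 := by
  set S := ∑' n, geomHalf n * x ^ n with hS
  have hS1 : S ≤ 1 := by
    rw [← geom_tsum]
    refine Summable.tsum_le_tsum (fun n => ?_) ENNReal.summable ENNReal.summable
    calc geomHalf n * x ^ n ≤ geomHalf n * 1 := mul_le_mul_right (pow_le_one' hx n) _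
      _ = geomHalf n := mul_one _
  have hxS : x * S ≤ 1 := le_trans (mul_le_mul' hx hS1) (by simp)
  have h2S : 2 * S = 1 + x * S := by
    rw [hS, ← ENNReal.tsum_mul_left]
    have hterm : ∀ n : ℕ, 2 * (geomHalf n * x ^ n) = (1/2 : ℝ≥0∞) ^ n * x ^ n := by
      intro n
      unfold geomHalf
      rw [pow_succ', ← mul_assoc, ← mul_assoc]
      norm_num
      rw [ENNReal.mul_inv_cancel (by norm_num) (by norm_num), one_mul]
    simp_rw [hterm]
    rw [tsum_eq_zero_add' ENNReal.summable]
    simp only [pow_zero, one_mul]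
    congr 1
    rw [← ENNReal.tsum_mul_left]
    refine tsum_congr fun n => ?_
    unfold geomHalf
    ring
  have hsub : (2 - x) * S = 2 * S - x * S := by
    refine ENNReal.sub_mul fun _ _ => ?_
    exact ne_top_of_le_ne_top ENNReal.one_ne_top hS1
  rw [hsub, h2S, ENNReal.add_sub_cancel_right (ne_top_of_le_ne_top ENNReal.one_ne_top hxS)]

lemma GE_poisson {α s : ℝ} (hα : 0 ≤ α) (hs : 0 ≤ s) :
    GE (poissonPMF α) (ENNReal.ofReal s) = ENNReal.ofReal (Real.exp (α * (s - 1))) := by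
  have hterm : ∀ k : ℕ, poissonPMF α k * (ENNReal.ofReal s) ^ k
      = ENNReal.ofReal (Real.exp (-α) * ((α * s) ^ k / (Nat.factorial k))) := by
    intro k
    unfold poissonPMF
    rw [← ENNReal.ofReal_pow hs, ← ENNReal.ofReal_mul (by positivity)]
    congr 1
    field_simp
    ring
  unfold GE
  simp_rw [hterm]
  have hsumm : Summable fun k : ℕ => (α * s) ^ k / (Nat.factorial k : ℝ) :=
    Real.summable_pow_div_factorial (α * s)
  rw [← ENNReal.ofReal_tsum_of_nonneg (fun k => by positivity) (hsumm.mul_left _)]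
  congr 1
  rw [tsum_mul_left]
  have : ∑' k : ℕ, (α * s) ^ k / (Nat.factorial k : ℝ) = Real.exp (α * s) := by
    rw [Real.exp_eq_exp_ℝ, NormedSpace.exp_eq_tsum_div]
  rw [this, ← Real.exp_add]
  congr 1
  ring

lemma main_identity {α : ℝ} {μ : ℕ → ℝ≥0∞} (hμ : SatisfiesRDE α μ)
    {t : ℝ≥0∞} (ht : t ≤ 1) :
    GE μ t * (2 - GE (shiftLaw μ) t) = GE (poissonPMF α) t := by
  obtain ⟨htot, hrde⟩ := hμ
  have hHle : GE (shiftLaw μ) t ≤ 1 := GE_le_one ((shift_tsum μ).trans htot) ht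
  have hG : GE μ t = GE (poissonPMF α) t * ∑' n, geomHalf n * (GE (shiftLaw μ) t) ^ n := by
    have step1 : GE μ t
        = ∑' n, geomHalf n * GE (convAdd (poissonPMF α) (iterConv (shiftLaw μ) n)) t := by
      unfold GE
      calc ∑' k, μ k * t ^ k
          = ∑' (k : ℕ) (n : ℕ), geomHalf n
              * convAdd (poissonPMF α) (iterConv (shiftLaw μ) n) k * t ^ k := by
            refine tsum_congr fun k => ?_
            rw [hrde k, ENNReal.tsum_mul_right]
        _ = ∑' (n : ℕ) (k : ℕ), geomHalf n
              * convAdd (poissonPMF α) (iterConv (shiftLaw μ) n) k * t ^ k :=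
            ENNReal.tsum_comm
        _ = _ := by
            refine tsum_congr fun n => ?_
            simp_rw [mul_assoc]
            rw [ENNReal.tsum_mul_left]
    rw [step1]
    simp_rw [GE_convAdd, GE_iter]
    rw [← ENNReal.tsum_mul_left]
    exact tsum_congr fun n => by ring
  rw [hG, mul_assoc,
    mul_comm (∑' n, geomHalf n * GE (shiftLaw μ) t ^ n) (2 - GE (shiftLaw μ) t),
    geom_mul hHle, mul_one]

/-- For α ∈ (0,1) and s ∈ (0,1],
((2−p)s + p)² − 4s·exp(α(s−1)) ≥ 0. -/
theorem discriminant_nonneg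
    (α : ℝ) (hα0 : 0 < α) (hα1 : α < 1)
    (μ : ℕ → ℝ≥0∞) (hμ : SatisfiesRDE α μ)
    (p : ℝ) (hp : p = (μ 0).toReal) :
    ∀ s ∈ Set.Ioc (0 : ℝ) 1,
      0 ≤ ((2 - p) * s + p) ^ 2 - 4 * s * Real.exp (α * (s - 1)) := by
  intro s hs
  obtain ⟨hs0, hs1⟩ := hs
  set t : ℝ≥0∞ := ENNReal.ofReal s with htdef
  have ht1 : t ≤ 1 := ENNReal.ofReal_le_one.mpr hs1
  have htot := hμ.1
  have hμ0ne : μ 0 ≠ ⊤ :=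
    ne_top_of_le_ne_top ENNReal.one_ne_top (htot ▸ ENNReal.le_tsum 0)
  have hGle : GE μ t ≤ 1 := GE_le_one htot ht1
  have hHle : GE (shiftLaw μ) t ≤ 1 := GE_le_one ((shift_tsum μ).trans htot) ht1
  have hGne : GE μ t ≠ ⊤ := ne_top_of_le_ne_top ENNReal.one_ne_top hGle
  have hHne : GE (shiftLaw μ) t ≠ ⊤ := ne_top_of_le_ne_top ENNReal.one_ne_top hHle
  have htne : t ≠ ⊤ := ENNReal.ofReal_ne_top
  set g := (GE μ t).toReal with hg
  set h := (GE (shiftLaw μ) t).toReal with hh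
  have hmain := (main_identity hμ ht1).trans (GE_poisson hα0.le hs0.le)
  have f1 : g * (2 - h) = Real.exp (α * (s - 1)) := by
    have := congrArg ENNReal.toReal hmain
    rw [ENNReal.toReal_mul,
      ENNReal.toReal_sub_of_le (le_trans hHle one_le_two) (by norm_num),
      ENNReal.toReal_ofReal (Real.exp_nonneg _)] at this
    simpa using this
  have f2 : s * h + p = g + p * s := by
    have := congrArg ENNReal.toReal (GE_shift μ t)
    rw [ENNReal.toReal_add (ENNReal.mul_ne_top htne hHne) hμ0ne,
      ENNReal.toReal_add hGne (ENNReal.mul_ne_top hμ0ne htne),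
      ENNReal.toReal_mul, ENNReal.toReal_mul,
      ENNReal.toReal_ofReal hs0.le] at this
    rw [hp]
    linarith [this]
  have key : s * Real.exp (α * (s - 1)) = g * ((2 - p) * s + p) - g ^ 2 := by
    linear_combination (-s) * f1 + (-g) * f2
  nlinarith [sq_nonneg ((2 - p) * s + p - 2 * g), key]
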